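/- Let r_s > 0, a > r_s/4, q be real numbers and let θ be any real number. Then the function r ↦ ψ(r,θ) is differentiable at r = r_s/4 with derivative equal to 0 (i.e. HasDerivAt (fun r => ψ(r,θ)) 0 (r_s/4)). Together with the θ-independence of ψ on the horizon, this expresses that the electrostatic field of the charged particle vanishes on the black-hole horizon. -/

import Mathlib

/-- Copson's auxiliary function μ(r,θ) with particle position `a` and `b = r_s²/(16a)`. -/
noncomputable def muLinet (r_s a r θ : ℝ) : ℝ :=
  Real.sqrt (((r - r_s ^ 2 / (16 * a)) ^ 2 +
      2 * (r_s ^ 2 / (16 * a)) * r * (1 - Real.cos θ)) /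
    ((r - a) ^ 2 + 2 * a * r * (1 - Real.cos θ)))

/-- Linet's electrostatic potential ψ(r,θ) = (Q/(rμ))·((μ + r_s/(4a))/(1 + r_s/(4r)))²,
with Q = q/(1 + r_s/(4a))². -/
noncomputable def psiLinet (r_s a q r θ : ℝ) : ℝ :=
  (q / (1 + r_s / (4 * a)) ^ 2) / (r * muLinet r_s a r θ) *
    ((muLinet r_s a r θ + r_s / (4 * a)) / (1 + r_s / (4 * r))) ^ 2

/-- The radial derivative of Linet's potential vanishes on the horizon r = r_s/4:
the electrostatic field vanishes on the black-hole horizon. -/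
theorem linet_potential_radial_derivative_on_horizon (r_s a q θ : ℝ)
    (hrs : 0 < r_s) (ha : r_s / 4 < a) :
    HasDerivAt (fun r => psiLinet r_s a q r θ) 0 (r_s / 4) := by
  have ha0 : 0 < a := lt_trans (by positivity) ha
  set s : ℝ := r_s / 4 with hs_def
  have hs : 0 < s := by positivity
  have hsa : s < a := ha
  set b : ℝ := r_s ^ 2 / (16 * a) with hb_def
  have hb : 0 < b := by positivity
  have hbsa : b = s ^ 2 / a := by rw [hb_def, hs_def, div_pow, div_div]; norm_num
  have hbs : b < s := by
    rw [hbsa, div_lt_iff₀ ha0]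
    nlinarith
  set c : ℝ := Real.cos θ with hc_def
  have hc : c ≤ 1 := Real.cos_le_one θ
  set N : ℝ → ℝ := fun r => (r - b) ^ 2 + 2 * b * r * (1 - c) with hN_def
  set D : ℝ → ℝ := fun r => (r - a) ^ 2 + 2 * a * r * (1 - c) with hD_def
  have hmu : ∀ r, muLinet r_s a r θ = Real.sqrt (N r / D r) := fun r => rfl
  have hDpos : ∀ r ∈ Set.Ioo b a, 0 < D r := by
    intro r hr
    have h1 : 0 < a - r := sub_pos.mpr hr.2
    have h2 : 0 < r := lt_trans hb hr.1
    have h3 : (0:ℝ) ≤ 1 - c := by linarith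
    simp only [hD_def]
    nlinarith [mul_pos h1 h1, mul_nonneg (mul_nonneg ha0.le h2.le) h3]
  have hNpos : ∀ r ∈ Set.Ioo b a, 0 < N r := by
    intro r hr
    have h1 : 0 < r - b := sub_pos.mpr hr.1
    have h2 : 0 < r := lt_trans hb hr.1
    have h3 : (0:ℝ) ≤ 1 - c := by linarith
    simp only [hN_def]
    nlinarith [mul_pos h1 h1, mul_nonneg (mul_nonneg hb.le h2.le) h3]
  have hsIoo : s ∈ Set.Ioo b a := ⟨hbs, hsa⟩
  have hDs : 0 < D s := hDpos s hsIoo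
  have hNs : N s = (s / a) ^ 2 * D s := by
    rw [hN_def, hD_def, hbsa]
    field_simp
    ring
  have hval : N s / D s = (s / a) ^ 2 := by
    rw [hNs, mul_div_assoc, div_self (ne_of_gt hDs), mul_one]
  have hmus : muLinet r_s a s θ = s / a := by
    rw [hmu, hval, Real.sqrt_sq (by positivity)]
  -- differentiability of μ at s
  have hNd : DifferentiableAt ℝ N s := by fun_prop
  have hDd : DifferentiableAt ℝ D s := by fun_prop
  have hquot : DifferentiableAt ℝ (fun r => N r / D r) s := hNd.div hDd (ne_of_gt hDs)
  have hμdiff : DifferentiableAt ℝ (fun r => muLinet r_s a r θ) s := by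
    have hne : N s / D s ≠ 0 := by rw [hval]; positivity
    have := (Real.hasDerivAt_sqrt hne).differentiableAt.comp s hquot
    exact this
  set m : ℝ := deriv (fun r => muLinet r_s a r θ) s with hm_def
  have hμ : HasDerivAt (fun r => muLinet r_s a r θ) m s := hμdiff.hasDerivAt
  have hμs_ne : muLinet r_s a s θ ≠ 0 := by rw [hmus]; positivity
  -- h part
  have Hh : HasDerivAt (fun r => muLinet r_s a r θ + (s / a) ^ 2 / muLinet r_s a r θ + 2 * (s / a)) 0 s := by
    have h2 := (hasDerivAt_const s ((s / a) ^ 2)).div hμ hμs_ne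
    have h3 := (hμ.add h2).add_const (2 * (s / a))
    refine h3.congr_deriv (Eq.symm ?_)
    rw [hmus]
    field_simp
    ring
  -- p part
  have hp : HasDerivAt (fun r : ℝ => r / (r + s) ^ 2) 0 s := by
    have hden : ((s + s) ^ 2 : ℝ) ≠ 0 := by positivity
    have h1 := (hasDerivAt_id s).div (((hasDerivAt_id s).add_const s).pow 2) hden
    refine h1.congr_deriv (Eq.symm ?_)
    simp only [Pi.pow_apply, id]
    field_simp
    ring
  have final : HasDerivAt (fun r =>
      (q / (1 + r_s / (4 * a)) ^ 2) *
        ((muLinet r_s a r θ + (s / a) ^ 2 / muLinet r_s a r θ + 2 * (s / a)) * (r / (r + s) ^ 2))) 0 s := by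
    have := (Hh.mul hp).const_mul (q / (1 + r_s / (4 * a)) ^ 2)
    simpa using this
  refine final.congr_of_eventuallyEq ?_
  filter_upwards [Ioo_mem_nhds hbs hsa] with r hr
  have hr0 : 0 < r := lt_trans hb hr.1
  have hμpos : 0 < muLinet r_s a r θ := by
    rw [hmu]
    exact Real.sqrt_pos.mpr (div_pos (hNpos r hr) (hDpos r hr))
  have hrs0 : r + s ≠ 0 := by positivity
  have hQden : (1 : ℝ) + r_s / (4 * a) ≠ 0 := by positivity
  have hrden : (1 : ℝ) + r_s / (4 * r) ≠ 0 := by positivity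
  unfold psiLinet
  rw [hs_def]
  field_simp
  ring
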